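/- arXiv:1611.05811 — 3 statements merged into one kernel-verified Lean document; each statement's English description precedes it below -/
import Mathlib

section
/- Let G be a finite group, k ≥ 3 an integer, and Θ a finite group acting on G by automorphisms, with Θ acting on G^{k−1} coordinatewise. Set ΘS(ḡ) := Σ_{θ∈Θ} S(θ(g₁),…,θ(g_{k−1})) in A_k(G). Then for all ḡ = (g₁,…,g_{k−1}) and h̄ = (h₁,…,h_{k−1}) in G^{k−1}: ΘS(ḡ)·ΘS(h̄) = |G|^{(⌈k/2⌉−1)/2} · Σ_{θ″∈Θ} (∏_{i=2}^{⌈k/2⌉} δ(h₁·θ″(g_{k+1−i}), h_i)) · ΘS(h₁θ″(g₁), h₁θ″(g₂), …, h₁θ″(g_{⌈k/2⌉}), h_{⌈k/2⌉+1}, …, h_{k−1}). -/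
open Finset

noncomputable section

/-- 1-indexed access into a `(k-1)`-tuple, with default value `1` out of range. -/
def idx1 {H : Type*} [One H] (k : ℕ) (v : Fin (k - 1) → H) (j : ℕ) : H :=
  if h : j - 1 < k - 1 then v ⟨j - 1, h⟩ else 1

/-- The product of two basis vectors `S(x̄)·S(ȳ)` of the `k`-box space `A_k(H)` of the
group planar algebra `P(H)` (Fact 4.4 of the paper):
`S(x̄)·S(ȳ) = |H|^{(⌈k/2⌉−1)/2} · ∏_{i=2}^{⌈k/2⌉} δ(y₁·x_{k+1−i}, y_i) ·
  S(y₁x₁, …, y₁x_{⌈k/2⌉}, y_{⌈k/2⌉+1}, …, y_{k−1})`. -/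
def basisMul {H : Type*} [Group H] [Fintype H] [DecidableEq H] (k : ℕ)
    (x y : Fin (k - 1) → H) : (Fin (k - 1) → H) →₀ ℂ :=
  ((((Fintype.card H : ℝ) ^ (((((k + 1) / 2 : ℕ) : ℝ) - 1) / 2) : ℝ) : ℂ) *
      ∏ i ∈ Finset.Icc 2 ((k + 1) / 2),
        (if idx1 k y 1 * idx1 k x (k + 1 - i) = idx1 k y i then (1 : ℂ) else 0)) •
    Finsupp.single
      (fun j : Fin (k - 1) =>
        if (j : ℕ) + 1 ≤ (k + 1) / 2 then idx1 k y 1 * x j else y j) (1 : ℂ)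

/-- The bilinear product on the `k`-box space `A_k(H) = ℂ[H^{k−1}]`, extending
`basisMul` bilinearly. -/
def mulAk {H : Type*} [Group H] [Fintype H] [DecidableEq H] (k : ℕ)
    (a b : (Fin (k - 1) → H) →₀ ℂ) : (Fin (k - 1) → H) →₀ ℂ :=
  a.sum fun x ca => b.sum fun y cb => (ca * cb) • basisMul k x y

/-- The `Θ`-orbit sum `ΘS(ḡ) = Σ_{θ∈Θ} S(θ(g₁),…,θ(g_{k−1})) ∈ A_k(G)`. -/
def thetaS {G Θ : Type*} [Group G] [Group Θ] [Fintype Θ] (φ : Θ →* MulAut G)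
    (k : ℕ) (g : Fin (k - 1) → G) : (Fin (k - 1) → G) →₀ ℂ :=
  ∑ θ : Θ, Finsupp.single (fun j => φ θ (g j)) (1 : ℂ)

lemma idx1_map {G : Type*} [Group G] (k : ℕ) (σ : MulAut G) (g : Fin (k - 1) → G)
    (i : ℕ) : idx1 k (fun j => σ (g j)) i = σ (idx1 k g i) := by
  unfold idx1; split <;> simp

lemma expand_lemma {G Θ : Type*} [Group G] [Fintype G] [DecidableEq G]
    [Group Θ] [Fintype Θ] (φ : Θ →* MulAut G) (k : ℕ)
    (g h : Fin (k - 1) → G) :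
    mulAk k (thetaS φ k g) (thetaS φ k h) =
      ∑ θ : Θ, ∑ θ' : Θ, basisMul k (fun j => φ θ (g j)) (fun j => φ θ' (h j)) := by
  rw [thetaS, thetaS, mulAk]
  rw [← Finsupp.sum_finsetSum_index (by intro i; simp [Finsupp.sum]) (by
    intro i x y
    simp only [add_mul, add_smul, ← Finsupp.sum_add]
  )]
  refine Finset.sum_congr rfl fun θ _ => ?_
  rw [Finsupp.sum_single_index (by simp [Finsupp.sum])]
  rw [← Finsupp.sum_finsetSum_index (by intro i; simp) (by intro i x y; simp [mul_add, add_smul])]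
  refine Finset.sum_congr rfl fun θ' _ => ?_
  rw [Finsupp.sum_single_index (by simp)]
  simp

lemma key_lemma {G Θ : Type*} [Group G] [Fintype G] [DecidableEq G]
    [Group Θ] [Fintype Θ] (φ : Θ →* MulAut G) (k : ℕ)
    (g h : Fin (k - 1) → G) (θ' θ'' : Θ) :
    basisMul k (fun j => φ (θ' * θ'') (g j)) (fun j => φ θ' (h j)) =
      ((((Fintype.card G : ℝ) ^ (((((k + 1) / 2 : ℕ) : ℝ) - 1) / 2) : ℝ) : ℂ) *
        ∏ i ∈ Finset.Icc 2 ((k + 1) / 2),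
          (if idx1 k h 1 * φ θ'' (idx1 k g (k + 1 - i)) = idx1 k h i
            then (1 : ℂ) else 0)) •
      Finsupp.single (fun j : Fin (k - 1) =>
        φ θ' (if (j : ℕ) + 1 ≤ (k + 1) / 2 then idx1 k h 1 * φ θ'' (g j) else h j))
        (1 : ℂ) := by
  rw [basisMul]
  congr 1
  · congr 1
    refine Finset.prod_congr rfl fun i _ => ?_
    rw [idx1_map, idx1_map, idx1_map]
    have : φ θ' (idx1 k h 1) * φ (θ' * θ'') (idx1 k g (k + 1 - i)) =
        φ θ' (idx1 k h 1 * φ θ'' (idx1 k g (k + 1 - i))) := by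
      simp [map_mul, MulAut.mul_apply]
    rw [this]
    simp only [(φ θ').injective.eq_iff]
  · congr 1
    funext j
    rw [idx1_map]
    split_ifs <;> simp [map_mul, MulAut.mul_apply]

/-- **Fact 4.5 of the paper**: the multiplication rule for the `Θ`-orbit sums
`ΘS(ḡ)` in the `k`-box space `A_k(G)` of the group planar algebra. -/
theorem thetaS_mul {G Θ : Type*} [Group G] [Fintype G] [DecidableEq G]
    [Group Θ] [Fintype Θ] (φ : Θ →* MulAut G) (k : ℕ) (hk : 3 ≤ k)
    (g h : Fin (k - 1) → G) :
    mulAk k (thetaS φ k g) (thetaS φ k h) =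
      ((((Fintype.card G : ℝ) ^ (((((k + 1) / 2 : ℕ) : ℝ) - 1) / 2) : ℝ) : ℂ) •
        ∑ θ'' : Θ,
          (∏ i ∈ Finset.Icc 2 ((k + 1) / 2),
            (if idx1 k h 1 * φ θ'' (idx1 k g (k + 1 - i)) = idx1 k h i
              then (1 : ℂ) else 0)) •
          thetaS φ k (fun j : Fin (k - 1) =>
            if (j : ℕ) + 1 ≤ (k + 1) / 2 then idx1 k h 1 * φ θ'' (g j) else h j)) := by
  rw [expand_lemma]
  conv_lhs => rw [Finset.sum_comm]
  rw [Finset.smul_sum]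
  simp only [thetaS, Finset.smul_sum]
  conv_rhs => rw [Finset.sum_comm]
  refine Finset.sum_congr rfl fun θ' _ => ?_
  rw [← Equiv.sum_comp (Equiv.mulLeft θ') _]
  refine Finset.sum_congr rfl fun θ'' _ => ?_
  rw [Equiv.coe_mulLeft, key_lemma, smul_smul]

end
end

section
/- Let G be a finite group, k ≥ 3 an integer, and Θ a finite group acting on G by automorphisms, and let G⋊Θ denote the semidirect product with multiplication (g₁,θ₁)(g₂,θ₂) = (g₁·θ₁(g₂), θ₁θ₂). For ḡ = (g₁,…,g_{k−1}) ∈ G^{k−1}, set U(ḡ) := Σ_{θ∈Θ} Σ_{γ̄∈Θ^{k−1}} S((θ(g₁),γ₁),…,(θ(g_{k−1}),γ_{k−1})) in A_k(G⋊Θ). Then for all ḡ, h̄ ∈ G^{k−1}: U(ḡ)·U(h̄) = |G|^{(⌈k/2⌉−1)/2} · |Θ|^{(⌈k/2⌉−1)/2} · |Θ|^{⌊k/2⌋} · Σ_{θ″∈Θ} (∏_{i=2}^{⌈k/2⌉} δ(h₁·θ″(g_{k+1−i}), h_i)) · U(h₁θ″(g₁), h₁θ″(g₂), …, h₁θ″(g_{⌈k/2⌉}),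 h_{⌈k/2⌉+1}, …, h_{k−1}). -/
open Finset

noncomputable section

-- Step A: bilinearity
lemma mulAk_sum_sum {H : Type*} [Group H] [Fintype H] [DecidableEq H] (k : ℕ)
    {ι κ : Type*} (s : Finset ι) (t : Finset κ)
    (f : ι → Fin (k - 1) → H) (p : κ → Fin (k - 1) → H) :
    mulAk k (∑ i ∈ s, Finsupp.single (f i) (1 : ℂ))
        (∑ j ∈ t, Finsupp.single (p j) (1 : ℂ)) =
      ∑ i ∈ s, ∑ j ∈ t, basisMul k (f i) (p j) := by
  unfold mulAk
  rw [← Finsupp.sum_finset_sum_index]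
  · refine Finset.sum_congr rfl fun i _ => ?_
    rw [Finsupp.sum_single_index]
    · rw [← Finsupp.sum_finset_sum_index]
      · refine Finset.sum_congr rfl fun j _ => ?_
        rw [Finsupp.sum_single_index] <;> simp
      · intro a; simp
      · intro a b₁ b₂; rw [← add_smul, mul_add]
    · simp [Finsupp.sum]
  · intro a; simp [Finsupp.sum]
  · intro a b₁ b₂
    rw [← Finsupp.sum_add]
    refine Finsupp.sum_congr fun y _ => ?_
    rw [← add_smul, add_mul]

lemma idx1_eq {H : Type*} [One H] (k : ℕ) (v : Fin (k - 1) → H) {j : ℕ}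
    (h1 : 1 ≤ j) (h2 : j ≤ k - 1) : idx1 k v j = v ⟨j - 1, by omega⟩ := by
  unfold idx1; rw [dif_pos]

lemma idx1_comp {H H' : Type*} [One H] [One H'] (k : ℕ) (F : H → H')
    (hF : F 1 = 1) (v : Fin (k - 1) → H) (n : ℕ) :
    idx1 k (fun j => F (v j)) n = F (idx1 k v n) := by
  unfold idx1; split <;> simp [hF]

lemma idx1_smul {Θ : Type*} [Group Θ] (k : ℕ) (c : Θ) (v : Fin (k - 1) → Θ) {n : ℕ}
    (h1 : 1 ≤ n) (h2 : n ≤ k - 1) :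
    idx1 k (fun j => c * v j) n = c * idx1 k v n := by
  rw [idx1_eq k _ h1 h2, idx1_eq k v h1 h2]

variable {G Θ : Type*} [Group G] [Fintype G] [DecidableEq G]
  [Group Θ] [Fintype Θ] [DecidableEq Θ] (φ : Θ →* MulAut G)

/-- The underlying equivalence `G ⋊[φ] Θ ≃ G × Θ`. -/
def sdpEquivProd : (G ⋊[φ] Θ) ≃ G × Θ where
  toFun s := (s.left, s.right)
  invFun p := ⟨p.1, p.2⟩
  left_inv _ := rfl
  right_inv _ := rfl

instance : Fintype (G ⋊[φ] Θ) := Fintype.ofEquiv (G × Θ) (sdpEquivProd φ).symm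

instance : DecidableEq (G ⋊[φ] Θ) := (sdpEquivProd φ).decidableEq

/-- `U(ḡ) = Σ_{θ∈Θ} Σ_{γ̄∈Θ^{k−1}} S((θ(g₁),γ₁),…,(θ(g_{k−1}),γ_{k−1})) ∈ A_k(G⋊Θ)`. -/
def Uel (k : ℕ) (g : Fin (k - 1) → G) : (Fin (k - 1) → G ⋊[φ] Θ) →₀ ℂ :=
  ∑ θ : Θ, ∑ γ : Fin (k - 1) → Θ,
    Finsupp.single (fun j => (⟨φ θ (g j), γ j⟩ : G ⋊[φ] Θ)) (1 : ℂ)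

lemma idx1_mk (k : ℕ) (u : Fin (k - 1) → G) (w : Fin (k - 1) → Θ) (n : ℕ) :
    idx1 k (fun j => (⟨u j, w j⟩ : G ⋊[φ] Θ)) n = ⟨idx1 k u n, idx1 k w n⟩ := by
  unfold idx1; split
  · rfl
  · exact SemidirectProduct.ext rfl rfl

/-- the `G`-part delta coefficient -/
def cGd (k : ℕ) (g h : Fin (k - 1) → G) (θ'' : Θ) : ℂ :=
  ∏ i ∈ Finset.Icc 2 ((k + 1) / 2),
    (if idx1 k h 1 * φ θ'' (idx1 k g (k + 1 - i)) = idx1 k h i then (1 : ℂ) else 0)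

/-- the target tuples on the right hand side -/
def Wf (k : ℕ) (g h : Fin (k - 1) → G) (θ' θ'' : Θ) (δ : Fin (k - 1) → Θ) :
    Fin (k - 1) → G ⋊[φ] Θ := fun j =>
  ⟨φ θ' (if (j : ℕ) + 1 ≤ (k + 1) / 2 then idx1 k h 1 * φ θ'' (g j) else h j), δ j⟩

/-- mixing two `Θ`-tuples: first half from `γ`, second half from `γ'` -/
def mixf (k : ℕ) (γ γ' : Fin (k - 1) → Θ) : Fin (k - 1) → Θ := fun j =>
  if (j : ℕ) + 1 ≤ (k + 1) / 2 then γ j else γ' j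

lemma idx1_mixf (k : ℕ) (γ γ' : Fin (k - 1) → Θ) {n : ℕ} (h1 : 1 ≤ n) (h2 : n ≤ k - 1) :
    idx1 k (mixf k γ γ') n =
      if n ≤ (k + 1) / 2 then idx1 k γ n else idx1 k γ' n := by
  rw [idx1_eq k _ h1 h2, idx1_eq k γ h1 h2, idx1_eq k γ' h1 h2]
  unfold mixf
  have : n - 1 + 1 = n := by omega
  simp only [this]

lemma mixf_mixf (k : ℕ) (δ ε : Fin (k - 1) → Θ) :
    mixf k (mixf k δ ε) (mixf k ε δ) = δ := by
  funext j; unfold mixf; split <;> simp_all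

lemma phi_comp (θ' θ'' : Θ) (a b : G) :
    φ θ' a * φ (θ' * θ'') b = φ θ' (a * φ θ'' b) := by
  rw [map_mul φ, MulAut.mul_apply, map_mul (φ θ')]

lemma ite_and_split (P Q : Prop) [Decidable P] [Decidable Q] :
    (if P ∧ Q then (1 : ℂ) else 0) = (if P then (1 : ℂ) else 0) * (if Q then 1 else 0) := by
  by_cases hP : P <;> by_cases hQ : Q <;> simp [hP, hQ]

lemma basisMul_XY (k : ℕ) (hk : 3 ≤ k) (g h : Fin (k - 1) → G) (θ'' θ' : Θ)
    (γ γ' : Fin (k - 1) → Θ) :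
    basisMul k (fun j => (⟨φ ((idx1 k γ' 1)⁻¹ * (θ' * θ'')) (g j), γ j⟩ : G ⋊[φ] Θ))
        (fun j => (⟨φ θ' (h j), γ' j⟩ : G ⋊[φ] Θ)) =
      ((((Fintype.card (G ⋊[φ] Θ) : ℝ) ^ (((((k + 1) / 2 : ℕ) : ℝ) - 1) / 2) : ℝ) : ℂ) *
          (cGd φ k g h θ'' *
            ∏ i ∈ Finset.Icc 2 ((k + 1) / 2),
              (if idx1 k γ' 1 * idx1 k γ (k + 1 - i) = idx1 k γ' i then (1 : ℂ) else 0))) •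
        Finsupp.single
          (Wf φ k g h θ' θ'' (mixf k (fun j => idx1 k γ' 1 * γ j) γ')) (1 : ℂ) := by
  have hm2 : 2 ≤ (k + 1) / 2 := by omega
  have hmk : (k + 1) / 2 ≤ k - 1 := by omega
  unfold basisMul
  congr 1
  · -- scalar part
    congr 1
    have key : ∀ i ∈ Finset.Icc 2 ((k + 1) / 2),
        (if idx1 k (fun j => (⟨φ θ' (h j), γ' j⟩ : G ⋊[φ] Θ)) 1 *
              idx1 k (fun j => (⟨φ ((idx1 k γ' 1)⁻¹ * (θ' * θ'')) (g j), γ j⟩ : G ⋊[φ] Θ))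
                (k + 1 - i) =
            idx1 k (fun j => (⟨φ θ' (h j), γ' j⟩ : G ⋊[φ] Θ)) i then (1 : ℂ) else 0) =
        (if idx1 k h 1 * φ θ'' (idx1 k g (k + 1 - i)) = idx1 k h i
            then (1 : ℂ) else 0) *
          (if idx1 k γ' 1 * idx1 k γ (k + 1 - i) = idx1 k γ' i then (1 : ℂ) else 0) := by
      intro i hi
      rw [Finset.mem_Icc] at hi
      rw [idx1_mk, idx1_mk, idx1_mk, idx1_comp k (φ θ') (map_one _),
        idx1_comp k (φ θ') (map_one _),
        idx1_comp k (φ ((idx1 k γ' 1)⁻¹ * (θ' * θ''))) (map_one _), ← ite_and_split]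
      refine if_congr ?_ rfl rfl
      rw [SemidirectProduct.mul_def, SemidirectProduct.ext_iff]
      simp only [← MulAut.mul_apply, ← map_mul φ, mul_inv_cancel_left, phi_comp,
        EmbeddingLike.apply_eq_iff_eq]
    rw [Finset.prod_congr rfl key, Finset.prod_mul_distrib]
    rfl
  · -- the single part
    congr 1
    funext j
    by_cases hj : (j : ℕ) + 1 ≤ (k + 1) / 2
    · rw [if_pos hj]
      rw [idx1_mk]
      show (⟨idx1 k (fun j => φ θ' (h j)) 1, idx1 k γ' 1⟩ : G ⋊[φ] Θ) *
          ⟨φ ((idx1 k γ' 1)⁻¹ * (θ' * θ'')) (g j), γ j⟩ = _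
      rw [idx1_comp k (φ θ') (map_one _) h 1, SemidirectProduct.mul_def]
      refine SemidirectProduct.ext ?_ ?_
      · show φ θ' (idx1 k h 1) * φ (idx1 k γ' 1) (φ ((idx1 k γ' 1)⁻¹ * (θ' * θ'')) (g j)) =
          (Wf φ k g h θ' θ'' _ j).left
        rw [Wf, if_pos hj]
        simp only [← MulAut.mul_apply, ← map_mul φ, mul_inv_cancel_left, phi_comp]
      · show idx1 k γ' 1 * γ j = (Wf φ k g h θ' θ'' _ j).right
        simp [Wf, mixf, hj]
    · rw [if_neg hj]
      refine SemidirectProduct.ext ?_ ?_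
      · show φ θ' (h j) = (Wf φ k g h θ' θ'' _ j).left
        rw [Wf, if_neg hj]
      · show γ' j = (Wf φ k g h θ' θ'' _ j).right
        simp [Wf, mixf, hj]

lemma count_lemma (k : ℕ) (hk : 3 ≤ k) (δ : Fin (k - 1) → Θ) :
    ∑ ε : Fin (k - 1) → Θ, ∏ i ∈ Finset.Icc 2 ((k + 1) / 2),
        (if (if k + 1 - i ≤ (k + 1) / 2 then idx1 k δ (k + 1 - i) else idx1 k ε (k + 1 - i))
            = idx1 k ε i then (1 : ℂ) else 0)
      = (Fintype.card Θ : ℂ) ^ (k / 2 : ℕ) := by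
  have hm2 : 2 ≤ (k + 1) / 2 := by omega
  have hmk : (k + 1) / 2 ≤ k - 1 := by omega
  set m := (k + 1) / 2 with hm
  -- the translation map
  set T : (Fin (k - 1) → Θ) → ℕ → Θ := fun ε i =>
    if k + 1 - i ≤ m then idx1 k δ (k + 1 - i) else idx1 k ε (k + 1 - i) with hT
  set ρ : (Fin (k - 1) → Θ) → (Fin (k - 1) → Θ) := fun ε j =>
    if 1 ≤ (j : ℕ) ∧ (j : ℕ) ≤ m - 1 then T ε ((j : ℕ) + 1) * ε j else ε j with hρ
  have hfix : ∀ (ε : Fin (k - 1) → Θ) (j : Fin (k - 1)),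
      ¬(1 ≤ (j : ℕ) ∧ (j : ℕ) ≤ m - 1) → ρ ε j = ε j := by
    intro ε j hj; simp only [hρ, if_neg hj]
  have hTρ : ∀ (ε : Fin (k - 1) → Θ) (i : ℕ), 2 ≤ i → i ≤ m → T (ρ ε) i = T ε i := by
    intro ε i h2 h3
    simp only [hT]
    split
    · rfl
    · rename_i hcase
      have hb1 : 1 ≤ k + 1 - i := by omega
      have hb2 : k + 1 - i ≤ k - 1 := by omega
      rw [idx1_eq k _ hb1 hb2, idx1_eq k _ hb1 hb2]
      exact hfix ε _ (by simp; omega)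
  have hinj : Function.Injective ρ := by
    intro ε₁ ε₂ hee
    have heq2 : ∀ j : Fin (k - 1), ¬(1 ≤ (j : ℕ) ∧ (j : ℕ) ≤ m - 1) → ε₁ j = ε₂ j := by
      intro j hj
      have := congrFun hee j
      rwa [hfix ε₁ j hj, hfix ε₂ j hj] at this
    have hTeq : ∀ i : ℕ, 2 ≤ i → i ≤ m → T ε₁ i = T ε₂ i := by
      intro i h2 h3
      simp only [hT]
      split
      · rfl
      · rename_i hcase
        have hb1 : 1 ≤ k + 1 - i := by omega
        have hb2 : k + 1 - i ≤ k - 1 := by omega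
        rw [idx1_eq k _ hb1 hb2, idx1_eq k _ hb1 hb2]
        exact heq2 _ (by simp; omega)
    funext j
    by_cases hj : 1 ≤ (j : ℕ) ∧ (j : ℕ) ≤ m - 1
    · have := congrFun hee j
      simp only [hρ, if_pos hj] at this
      rw [hTeq ((j : ℕ) + 1) (by omega) (by omega)] at this
      exact mul_left_cancel this
    · exact heq2 j hj
  have hbij : Function.Bijective ρ := Finite.injective_iff_bijective.mp hinj
  rw [← Fintype.sum_bijective ρ hbij
    (fun ε => ∏ i ∈ Finset.Icc 2 m,
      (if T (ρ ε) i = idx1 k (ρ ε) i then (1 : ℂ) else 0))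
    (fun ε => ∏ i ∈ Finset.Icc 2 m,
      (if T ε i = idx1 k ε i then (1 : ℂ) else 0)) (fun ε => rfl)]
  have hstep : ∀ ε : Fin (k - 1) → Θ,
      (∏ i ∈ Finset.Icc 2 m, (if T (ρ ε) i = idx1 k (ρ ε) i then (1 : ℂ) else 0)) =
      ∏ i ∈ Finset.Icc 2 m, (if idx1 k ε i = 1 then (1 : ℂ) else 0) := by
    intro ε
    refine Finset.prod_congr rfl fun i hi => ?_
    rw [Finset.mem_Icc] at hi
    have hb1 : 1 ≤ i := by omega
    have hb2 : i ≤ k - 1 := by omega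
    rw [hTρ ε i hi.1 hi.2, idx1_eq k _ hb1 hb2, idx1_eq k ε hb1 hb2]
    have hρval : ρ ε ⟨i - 1, by omega⟩ = T ε i * ε ⟨i - 1, by omega⟩ := by
      simp only [hρ]
      rw [if_pos (by constructor <;> omega)]
      congr 2
      omega
    rw [hρval]
    refine if_congr ?_ rfl rfl
    exact left_eq_mul
  rw [Finset.sum_congr rfl fun ε _ => hstep ε]
  -- now a pure counting problem
  have hreindex : ∀ ε : Fin (k - 1) → Θ,
      (∏ i ∈ Finset.Icc 2 m, (if idx1 k ε i = 1 then (1 : ℂ) else 0)) =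
      ∏ j : Fin (k - 1), (if 1 ≤ (j : ℕ) ∧ (j : ℕ) ≤ m - 1
        then (if ε j = 1 then (1 : ℂ) else 0) else 1) := by
    intro ε
    rw [← Finset.prod_filter]
    refine Finset.prod_bij'
      (i := fun a ha => (⟨a - 1, by rw [Finset.mem_Icc] at ha; omega⟩ : Fin (k - 1)))
      (j := fun b hb => (b : ℕ) + 1) (hi := ?_) (hj := ?_) (left_inv := ?_)
      (right_inv := ?_) (h := ?_)
    · intro a ha
      rw [Finset.mem_Icc] at ha
      simp only [Finset.mem_filter, Finset.mem_univ, true_and]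
      omega
    · intro b hb
      simp only [Finset.mem_filter, Finset.mem_univ, true_and] at hb
      show (b : ℕ) + 1 ∈ Finset.Icc 2 m
      rw [Finset.mem_Icc]; omega
    · intro a ha
      rw [Finset.mem_Icc] at ha
      show (⟨a - 1, _⟩ : Fin (k - 1)).val + 1 = a
      simp only []
      omega
    · intro b hb
      apply Fin.ext
      simp only []
      omega
    · intro a ha
      rw [Finset.mem_Icc] at ha
      rw [idx1_eq k ε (by omega) (by omega)]
  rw [Finset.sum_congr rfl fun ε _ => hreindex ε]
  have hps := Fintype.prod_sum (ι := Fin (k - 1)) (κ := fun _ => Θ)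
    (f := fun j x => if 1 ≤ (j : ℕ) ∧ (j : ℕ) ≤ m - 1 then (if x = 1 then (1 : ℂ) else 0) else 1)
  rw [← hps]
  have hfac : ∀ j : Fin (k - 1),
      (∑ x : Θ, if 1 ≤ (j : ℕ) ∧ (j : ℕ) ≤ m - 1 then (if x = 1 then (1 : ℂ) else 0) else 1)
      = if 1 ≤ (j : ℕ) ∧ (j : ℕ) ≤ m - 1 then (1 : ℂ) else (Fintype.card Θ : ℂ) := by
    intro j
    by_cases hp : 1 ≤ (j : ℕ) ∧ (j : ℕ) ≤ m - 1
    · simp [hp, Finset.sum_ite_eq']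
    · simp [hp, Finset.sum_const, Finset.card_univ]
  rw [Finset.prod_congr rfl fun j _ => hfac j, Finset.prod_ite (fun _ => (1 : ℂ))
    (fun _ => (Fintype.card Θ : ℂ)), Finset.prod_const_one, one_mul, Finset.prod_const]
  congr 1
  -- card computation
  have hcardp : (Finset.univ.filter fun j : Fin (k - 1) =>
      1 ≤ (j : ℕ) ∧ (j : ℕ) ≤ m - 1).card = m - 1 := by
    have hcc : (Finset.univ.filter fun j : Fin (k - 1) =>
        1 ≤ (j : ℕ) ∧ (j : ℕ) ≤ m - 1).card = (Finset.Icc 1 (m - 1)).card := by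
      apply Finset.card_bij (fun (a : Fin (k - 1)) _ => (a : ℕ))
      · intro a ha
        simp only [Finset.mem_filter, Finset.mem_univ, true_and] at ha
        rw [Finset.mem_Icc]; omega
      · intro a ha b hb hab; exact Fin.ext hab
      · intro b hb
        rw [Finset.mem_Icc] at hb
        refine ⟨⟨b, by omega⟩, ?_, rfl⟩
        simp only [Finset.mem_filter, Finset.mem_univ, true_and]
        omega
    rw [hcc, Nat.card_Icc]; omega
  rw [Finset.filter_not, Finset.card_sdiff_of_subset (Finset.filter_subset _ _), hcardp,
    Finset.card_univ, Fintype.card_fin]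
  congr 1
  omega

lemma mix_sum (k : ℕ) (hk : 3 ≤ k) {M : Type*} [AddCommMonoid M] [Module ℂ M]
    (F : (Fin (k - 1) → Θ) → M) :
    (∑ γ : Fin (k - 1) → Θ, ∑ γ' : Fin (k - 1) → Θ,
        (∏ i ∈ Finset.Icc 2 ((k + 1) / 2),
          (if idx1 k γ (k + 1 - i) = idx1 k γ' i then (1 : ℂ) else 0)) • F (mixf k γ γ'))
      = ((Fintype.card Θ : ℂ) ^ (k / 2 : ℕ)) • ∑ δ : Fin (k - 1) → Θ, F δ := by
  have hm2 : 2 ≤ (k + 1) / 2 := by omega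
  have hmk : (k + 1) / 2 ≤ k - 1 := by omega
  have h1 : (∑ γ : Fin (k - 1) → Θ, ∑ γ' : Fin (k - 1) → Θ,
      (∏ i ∈ Finset.Icc 2 ((k + 1) / 2),
        (if idx1 k γ (k + 1 - i) = idx1 k γ' i then (1 : ℂ) else 0)) • F (mixf k γ γ'))
      = ∑ p : (Fin (k - 1) → Θ) × (Fin (k - 1) → Θ),
        (∏ i ∈ Finset.Icc 2 ((k + 1) / 2),
          (if idx1 k p.1 (k + 1 - i) = idx1 k p.2 i then (1 : ℂ) else 0)) • F (mixf k p.1 p.2) :=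
    (Fintype.sum_prod_type (f := fun p : (Fin (k - 1) → Θ) × (Fin (k - 1) → Θ) =>
      (∏ i ∈ Finset.Icc 2 ((k + 1) / 2),
        (if idx1 k p.1 (k + 1 - i) = idx1 k p.2 i then (1 : ℂ) else 0)) •
          F (mixf k p.1 p.2))).symm
  rw [h1]
  have hE : Function.Involutive (fun p : (Fin (k - 1) → Θ) × (Fin (k - 1) → Θ) =>
      (mixf k p.1 p.2, mixf k p.2 p.1)) := by
    intro p
    exact Prod.ext (mixf_mixf k p.1 p.2) (mixf_mixf k p.2 p.1)
  rw [← Function.Bijective.sum_comp hE.bijective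
    (fun p : (Fin (k - 1) → Θ) × (Fin (k - 1) → Θ) =>
      (∏ i ∈ Finset.Icc 2 ((k + 1) / 2),
        (if idx1 k p.1 (k + 1 - i) = idx1 k p.2 i then (1 : ℂ) else 0)) • F (mixf k p.1 p.2))]
  have hpt : ∀ p : (Fin (k - 1) → Θ) × (Fin (k - 1) → Θ),
      ((∏ i ∈ Finset.Icc 2 ((k + 1) / 2),
        (if idx1 k (mixf k p.1 p.2) (k + 1 - i) = idx1 k (mixf k p.2 p.1) i
          then (1 : ℂ) else 0)) • F (mixf k (mixf k p.1 p.2) (mixf k p.2 p.1)))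
      = (∏ i ∈ Finset.Icc 2 ((k + 1) / 2),
          (if (if k + 1 - i ≤ (k + 1) / 2 then idx1 k p.1 (k + 1 - i) else idx1 k p.2 (k + 1 - i))
            = idx1 k p.2 i then (1 : ℂ) else 0)) • F p.1 := by
    intro p
    rw [mixf_mixf]
    congr 1
    refine Finset.prod_congr rfl fun i hi => ?_
    rw [Finset.mem_Icc] at hi
    rw [idx1_mixf k p.1 p.2 (by omega) (by omega),
      idx1_mixf k p.2 p.1 (by omega : 1 ≤ i) (by omega), if_pos hi.2]
  rw [Finset.sum_congr rfl fun p _ => hpt p, Fintype.sum_prod_type]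
  rw [Finset.sum_congr rfl fun δ (_ : δ ∈ Finset.univ) => (Finset.sum_smul).symm]
  rw [Finset.sum_congr rfl fun δ (_ : δ ∈ Finset.univ) => by rw [count_lemma k hk δ]]
  rw [Finset.smul_sum]

/-- **Lemma 4.8 of the paper**: the multiplication rule for the vectors `U(ḡ)` in
the `k`-box space `A_k(G⋊Θ)`. -/
theorem Uel_mul (k : ℕ) (hk : 3 ≤ k) (g h : Fin (k - 1) → G) :
    mulAk k (Uel φ k g) (Uel φ k h) =
      ((((Fintype.card G : ℝ) ^ (((((k + 1) / 2 : ℕ) : ℝ) - 1) / 2) *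
          (Fintype.card Θ : ℝ) ^ (((((k + 1) / 2 : ℕ) : ℝ) - 1) / 2) *
          (Fintype.card Θ : ℝ) ^ (k / 2 : ℕ) : ℝ) : ℂ) •
        ∑ θ'' : Θ,
          (∏ i ∈ Finset.Icc 2 ((k + 1) / 2),
            (if idx1 k h 1 * φ θ'' (idx1 k g (k + 1 - i)) = idx1 k h i
              then (1 : ℂ) else 0)) •
          Uel φ k (fun j : Fin (k - 1) =>
            if (j : ℕ) + 1 ≤ (k + 1) / 2 then idx1 k h 1 * φ θ'' (g j) else h j)) := by
  have hm2 : 2 ≤ (k + 1) / 2 := by omega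
  have hmk : (k + 1) / 2 ≤ k - 1 := by omega
  set CH : ℂ :=
    (((Fintype.card (G ⋊[φ] Θ) : ℝ) ^ (((((k + 1) / 2 : ℕ) : ℝ) - 1) / 2) : ℝ) : ℂ) with hCH
  -- expand the LHS into a double sum of basis products
  have hUg : Uel φ k g = ∑ p : Θ × (Fin (k - 1) → Θ),
      Finsupp.single (fun j => (⟨φ p.1 (g j), p.2 j⟩ : G ⋊[φ] Θ)) (1 : ℂ) :=
    (Fintype.sum_prod_type (f := fun p : Θ × (Fin (k - 1) → Θ) =>
      Finsupp.single (fun j => (⟨φ p.1 (g j), p.2 j⟩ : G ⋊[φ] Θ)) (1 : ℂ))).symm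
  have hUh : Uel φ k h = ∑ q : Θ × (Fin (k - 1) → Θ),
      Finsupp.single (fun j => (⟨φ q.1 (h j), q.2 j⟩ : G ⋊[φ] Θ)) (1 : ℂ) :=
    (Fintype.sum_prod_type (f := fun q : Θ × (Fin (k - 1) → Θ) =>
      Finsupp.single (fun j => (⟨φ q.1 (h j), q.2 j⟩ : G ⋊[φ] Θ)) (1 : ℂ))).symm
  rw [hUg, hUh, mulAk_sum_sum, Finset.sum_comm]
  -- the inner sum over `p`, for fixed `q = (θ', γ')`
  have hinner : ∀ θ' : Θ, ∀ γ' : Fin (k - 1) → Θ,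
      (∑ p : Θ × (Fin (k - 1) → Θ),
        basisMul k (fun j => (⟨φ p.1 (g j), p.2 j⟩ : G ⋊[φ] Θ))
          (fun j => (⟨φ θ' (h j), γ' j⟩ : G ⋊[φ] Θ))) =
      ∑ θ'' : Θ, ∑ δ : Fin (k - 1) → Θ,
        (CH * cGd φ k g h θ'') •
          ((∏ i ∈ Finset.Icc 2 ((k + 1) / 2),
            (if idx1 k δ (k + 1 - i) = idx1 k γ' i then (1 : ℂ) else 0)) •
            Finsupp.single (Wf φ k g h θ' θ'' (mixf k δ γ')) (1 : ℂ)) := by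
    intro θ' γ'
    rw [Fintype.sum_prod_type (f := fun p : Θ × (Fin (k - 1) → Θ) =>
      basisMul k (fun j => (⟨φ p.1 (g j), p.2 j⟩ : G ⋊[φ] Θ))
        (fun j => (⟨φ θ' (h j), γ' j⟩ : G ⋊[φ] Θ)))]
    set c : Θ := idx1 k γ' 1 with hc
    rw [← Equiv.sum_comp ((Equiv.mulLeft θ').trans (Equiv.mulLeft c⁻¹))
      (fun θ => ∑ γ : Fin (k - 1) → Θ,
        basisMul k (fun j => (⟨φ θ (g j), γ j⟩ : G ⋊[φ] Θ))
          (fun j => (⟨φ θ' (h j), γ' j⟩ : G ⋊[φ] Θ)))]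
    refine Finset.sum_congr rfl fun θ'' _ => ?_
    rw [← Equiv.sum_comp (Equiv.piCongrRight fun _ : Fin (k - 1) => Equiv.mulLeft c⁻¹)
      (fun γ : Fin (k - 1) → Θ =>
        basisMul k (fun j =>
            (⟨φ (((Equiv.mulLeft θ').trans (Equiv.mulLeft c⁻¹)) θ'') (g j), γ j⟩ : G ⋊[φ] Θ))
          (fun j => (⟨φ θ' (h j), γ' j⟩ : G ⋊[φ] Θ)))]
    refine Finset.sum_congr rfl fun δ _ => ?_
    have e1app : ((Equiv.mulLeft θ').trans (Equiv.mulLeft c⁻¹)) θ'' = c⁻¹ * (θ' * θ'') := rfl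
    have e2app : (Equiv.piCongrRight fun _ : Fin (k - 1) => Equiv.mulLeft c⁻¹) δ =
        fun j => c⁻¹ * δ j := rfl
    rw [e1app, e2app]
    rw [basisMul_XY φ k hk g h θ'' θ' (fun j => c⁻¹ * δ j) γ']
    have harg : (fun j => idx1 k γ' 1 * (c⁻¹ * δ j)) = δ := by
      funext j; rw [← hc, mul_inv_cancel_left]
    have hprod : (∏ i ∈ Finset.Icc 2 ((k + 1) / 2),
        (if idx1 k γ' 1 * idx1 k (fun j => c⁻¹ * δ j) (k + 1 - i) = idx1 k γ' i
          then (1 : ℂ) else 0)) =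
        ∏ i ∈ Finset.Icc 2 ((k + 1) / 2),
          (if idx1 k δ (k + 1 - i) = idx1 k γ' i then (1 : ℂ) else 0) := by
      refine Finset.prod_congr rfl fun i hi => ?_
      rw [Finset.mem_Icc] at hi
      rw [idx1_smul k c⁻¹ δ (by omega) (by omega), ← hc, mul_inv_cancel_left]
    rw [hprod, harg, ← mul_assoc, mul_smul]
  rw [Finset.sum_congr rfl fun q (_ : q ∈ Finset.univ) => hinner q.1 q.2]
  -- expand the `q` sum and rearrange
  rw [Fintype.sum_prod_type (f := fun q : Θ × (Fin (k - 1) → Θ) =>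
    ∑ θ'' : Θ, ∑ δ : Fin (k - 1) → Θ,
      (CH * cGd φ k g h θ'') •
        ((∏ i ∈ Finset.Icc 2 ((k + 1) / 2),
          (if idx1 k δ (k + 1 - i) = idx1 k q.2 i then (1 : ℂ) else 0)) •
          Finsupp.single (Wf φ k g h q.1 θ'' (mixf k δ q.2)) (1 : ℂ)))]
  -- now : ∑ θ' ∑ γ' ∑ θ'' ∑ δ  …  ; swap γ' and θ''
  rw [Finset.sum_congr rfl fun θ' (_ : θ' ∈ Finset.univ) => Finset.sum_comm]
  -- for each (θ', θ''), collapse the γ'-δ double sum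
  have hcollapse : ∀ θ' θ'' : Θ,
      (∑ γ' : Fin (k - 1) → Θ, ∑ δ : Fin (k - 1) → Θ,
        (CH * cGd φ k g h θ'') •
          ((∏ i ∈ Finset.Icc 2 ((k + 1) / 2),
            (if idx1 k δ (k + 1 - i) = idx1 k γ' i then (1 : ℂ) else 0)) •
            Finsupp.single (Wf φ k g h θ' θ'' (mixf k δ γ')) (1 : ℂ))) =
      (CH * cGd φ k g h θ'') • (((Fintype.card Θ : ℂ) ^ (k / 2 : ℕ)) •
        ∑ δ : Fin (k - 1) → Θ, Finsupp.single (Wf φ k g h θ' θ'' δ) (1 : ℂ)) := by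
    intro θ' θ''
    rw [Finset.sum_congr rfl fun γ' (_ : γ' ∈ Finset.univ) => (Finset.smul_sum).symm]
    rw [← Finset.smul_sum, Finset.sum_comm]
    rw [mix_sum k hk (fun δ => Finsupp.single (Wf φ k g h θ' θ'' δ) (1 : ℂ))]
  rw [Finset.sum_congr rfl fun θ' (_ : θ' ∈ Finset.univ) =>
    Finset.sum_congr rfl fun θ'' (_ : θ'' ∈ Finset.univ) => hcollapse θ' θ'']
  -- now handle the right hand side
  have hUel : ∀ θ'' : Θ,
      Uel φ k (fun j : Fin (k - 1) =>
        if (j : ℕ) + 1 ≤ (k + 1) / 2 then idx1 k h 1 * φ θ'' (g j) else h j) =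
      ∑ θ' : Θ, ∑ δ : Fin (k - 1) → Θ,
        Finsupp.single (Wf φ k g h θ' θ'' δ) (1 : ℂ) := by
    intro θ''
    unfold Uel Wf
    rfl
  simp only [hUel, Finset.smul_sum]
  conv_lhs => rw [Finset.sum_comm]
  refine Finset.sum_congr rfl fun θ'' _ => Finset.sum_congr rfl fun θ' _ =>
    Finset.sum_congr rfl fun δ _ => ?_
  rw [smul_smul, smul_smul]
  congr 1
  show CH * cGd φ k g h θ'' * (Fintype.card Θ : ℂ) ^ (k / 2 : ℕ) =
    (((Fintype.card G : ℝ) ^ (((((k + 1) / 2 : ℕ) : ℝ) - 1) / 2) *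
        (Fintype.card Θ : ℝ) ^ (((((k + 1) / 2 : ℕ) : ℝ) - 1) / 2) *
        (Fintype.card Θ : ℝ) ^ (k / 2 : ℕ) : ℝ) : ℂ) * cGd φ k g h θ''
  have hcard : (Fintype.card (G ⋊[φ] Θ) : ℝ) = (Fintype.card G : ℝ) * (Fintype.card Θ : ℝ) := by
    rw_mod_cast [Fintype.card_congr (sdpEquivProd φ), Fintype.card_prod]
  rw [hCH, hcard, Real.mul_rpow (by positivity) (by positivity)]
  push_cast
  ring

end
end

section
/- Let G be a finite group and Θ a finite group acting on G by automorphisms, and let G⋊Θ denote the semidirect product with multiplication (g₁,θ₁)(g₂,θ₂) = (g₁·θ₁(g₂), θ₁θ₂). In ℂ[G] set ΘS(g) := Σ_{θ∈Θ} e_{θ(g)}, and in ℂ[G⋊Θ] set U(g) := Σ_{θ∈Θ} Σ_{γ∈Θ} e_{(θ(g),γ)}. Then there is a unique ℂ-linear map Φ₂ from the span of {ΘS(g) : g ∈ G} in ℂ[G] into ℂ[G⋊Θ] with Φ₂(ΘS(g)) = |Θ|^{−1} U(g) for all g ∈ G; moreover the span of the ΘS(g) is closed under multiplication in ℂ[G],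 and Φ₂ is multiplicative: Φ₂(x·y) = Φ₂(x)·Φ₂(y) for all x, y in that span. -/
open Finset

noncomputable section

/-- The `Θ`-orbit sum `ΘS(g) = Σ_{θ∈Θ} e_{θ(g)}` in the group algebra `ℂ[G]`. -/
def thetaS2 {G Θ : Type*} [Group G] [Group Θ] [Fintype Θ] (φ : Θ →* MulAut G)
    (g : G) : MonoidAlgebra ℂ G :=
  ∑ θ : Θ, MonoidAlgebra.single (φ θ g) (1 : ℂ)

/-- `U(g) = Σ_{θ∈Θ} Σ_{γ∈Θ} e_{(θ(g),γ)}` in the group algebra `ℂ[G⋊Θ]`. -/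
def Uel2 {G Θ : Type*} [Group G] [Group Θ] [Fintype Θ] (φ : Θ →* MulAut G)
    (g : G) : MonoidAlgebra ℂ (G ⋊[φ] Θ) :=
  ∑ θ : Θ, ∑ γ : Θ, MonoidAlgebra.single (⟨φ θ g, γ⟩ : G ⋊[φ] Θ) (1 : ℂ)

namespace PhiTwoAux

variable {G Θ : Type*} [Group G] [Group Θ] [Fintype Θ] (φ : Θ →* MulAut G)

/-- The global linear map `ℂ[G] → ℂ[G⋊Θ]`, `e_x ↦ |Θ|⁻¹ Σ_γ e_{(x,γ)}`. -/
def L : MonoidAlgebra ℂ G →ₗ[ℂ] MonoidAlgebra ℂ (G ⋊[φ] Θ) :=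
  (Finsupp.linearCombination ℂ fun x =>
    ((Fintype.card Θ : ℂ))⁻¹ • ∑ γ : Θ, MonoidAlgebra.single (⟨x, γ⟩ : G ⋊[φ] Θ) (1 : ℂ))
  ∘ₗ (MonoidAlgebra.coeffLinearEquiv ℂ).toLinearMap

lemma L_single (x : G) (c : ℂ) :
    L φ (MonoidAlgebra.single x c) =
      c • ((Fintype.card Θ : ℂ))⁻¹ •
        ∑ γ : Θ, MonoidAlgebra.single (⟨x, γ⟩ : G ⋊[φ] Θ) (1 : ℂ) := by
  exact Finsupp.linearCombination_single ℂ (v := fun x : G =>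
    ((Fintype.card Θ : ℂ))⁻¹ • ∑ γ : Θ, MonoidAlgebra.single (⟨x, γ⟩ : G ⋊[φ] Θ) (1 : ℂ)) c x

lemma L_thetaS (g : G) : L φ (thetaS2 φ g) = ((Fintype.card Θ : ℂ))⁻¹ • Uel2 φ g := by
  simp [thetaS2, Uel2, map_sum, L_single, Finset.smul_sum]

lemma thetaS2_mul (g h : G) :
    thetaS2 φ g * thetaS2 φ h = ∑ δ : Θ, thetaS2 φ (g * φ δ h) := by
  simp only [thetaS2, Finset.sum_mul_sum, MonoidAlgebra.single_mul_single, one_mul]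
  conv_rhs => rw [Finset.sum_comm]
  refine Finset.sum_congr rfl fun θ _ => ?_
  refine (Fintype.sum_equiv (Equiv.mulLeft θ)
    (fun δ => MonoidAlgebra.single (φ θ (g * φ δ h)) (1 : ℂ))
    (fun γ => MonoidAlgebra.single (φ θ g * φ γ h) (1 : ℂ)) fun δ => ?_).symm
  simp [map_mul]

lemma Uel2_mul (g h : G) :
    Uel2 φ g * Uel2 φ h = (Fintype.card Θ) • ∑ δ : Θ, Uel2 φ (g * φ δ h) := by
  have hU : ∀ k : G, Uel2 φ k =
      ∑ p : Θ × Θ, MonoidAlgebra.single (⟨φ p.1 k, p.2⟩ : G ⋊[φ] Θ) (1 : ℂ) := fun k => by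
    rw [Uel2]
    exact (Fintype.sum_prod_type'
      (fun θ γ => MonoidAlgebra.single (⟨φ θ k, γ⟩ : G ⋊[φ] Θ) (1 : ℂ))).symm
  have hmul : ∀ (a b : G) (x y : Θ),
      (⟨a, x⟩ : G ⋊[φ] Θ) * ⟨b, y⟩ = ⟨a * φ x b, x * y⟩ := fun a b x y => rfl
  have key : ∀ p : Θ × Θ,
      (∑ q : Θ × Θ, MonoidAlgebra.single
        ((⟨φ p.1 g, p.2⟩ : G ⋊[φ] Θ) * ⟨φ q.1 h, q.2⟩) (1 : ℂ)) =
      ∑ q : Θ × Θ, MonoidAlgebra.single (⟨φ p.1 g * φ q.1 h, q.2⟩ : G ⋊[φ] Θ) (1 : ℂ) := by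
    intro p
    rw [← Equiv.sum_comp ((Equiv.mulLeft p.2).prodCongr (Equiv.mulLeft p.2))
      (fun q : Θ × Θ => MonoidAlgebra.single (⟨φ p.1 g * φ q.1 h, q.2⟩ : G ⋊[φ] Θ) (1 : ℂ))]
    refine Finset.sum_congr rfl fun q _ => ?_
    rw [hmul]
    simp [map_mul]
  calc Uel2 φ g * Uel2 φ h
      = ∑ p : Θ × Θ, ∑ q : Θ × Θ, MonoidAlgebra.single
          ((⟨φ p.1 g, p.2⟩ : G ⋊[φ] Θ) * ⟨φ q.1 h, q.2⟩) (1 : ℂ) := by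
        rw [hU g, hU h, Finset.sum_mul_sum]
        simp only [MonoidAlgebra.single_mul_single, one_mul]
    _ = ∑ p : Θ × Θ, ∑ q : Θ × Θ,
          MonoidAlgebra.single (⟨φ p.1 g * φ q.1 h, q.2⟩ : G ⋊[φ] Θ) (1 : ℂ) :=
        Finset.sum_congr rfl fun p _ => key p
    _ = ∑ θ : Θ, ∑ _γ : Θ, ∑ q : Θ × Θ,
          MonoidAlgebra.single (⟨φ θ g * φ q.1 h, q.2⟩ : G ⋊[φ] Θ) (1 : ℂ) :=
        Fintype.sum_prod_type' (fun θ _γ => ∑ q : Θ × Θ,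
          MonoidAlgebra.single (⟨φ θ g * φ q.1 h, q.2⟩ : G ⋊[φ] Θ) (1 : ℂ))
    _ = (Fintype.card Θ) • ∑ θ : Θ, ∑ q : Θ × Θ,
          MonoidAlgebra.single (⟨φ θ g * φ q.1 h, q.2⟩ : G ⋊[φ] Θ) (1 : ℂ) := by
        simp only [Finset.sum_const, Finset.card_univ]
        rw [← Finset.smul_sum]
    _ = (Fintype.card Θ) • ∑ δ : Θ, Uel2 φ (g * φ δ h) := by
        congr 1
        simp only [Uel2]
        conv_rhs => rw [Finset.sum_comm]
        refine Finset.sum_congr rfl fun θ _ => ?_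
        refine (Fintype.sum_prod_type' (fun δ γ =>
          MonoidAlgebra.single (⟨φ θ g * φ δ h, γ⟩ : G ⋊[φ] Θ) (1 : ℂ))).trans ?_
        refine (Fintype.sum_equiv (Equiv.mulLeft θ)
          (fun δ => ∑ γ : Θ, MonoidAlgebra.single
            (⟨φ θ (g * φ δ h), γ⟩ : G ⋊[φ] Θ) (1 : ℂ))
          (fun δ => ∑ γ : Θ, MonoidAlgebra.single
            (⟨φ θ g * φ δ h, γ⟩ : G ⋊[φ] Θ) (1 : ℂ)) fun δ => ?_).symm
        simp [map_mul]

lemma L_mul_gen (g h : G) :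
    L φ (thetaS2 φ g * thetaS2 φ h) = L φ (thetaS2 φ g) * L φ (thetaS2 φ h) := by
  have hc : (Fintype.card Θ : ℂ) ≠ 0 := Nat.cast_ne_zero.mpr Fintype.card_ne_zero
  rw [thetaS2_mul, map_sum]
  simp only [L_thetaS]
  rw [smul_mul_smul_comm, Uel2_mul, ← Nat.cast_smul_eq_nsmul ℂ, smul_smul,
    ← Finset.smul_sum]
  congr 1
  field_simp

end PhiTwoAux

/-- **Theorem 4.10 / Definition 4.9 of the paper, case `k = 2`**: the span of the
`ΘS(g)` in `ℂ[G]` is closed under multiplication, there is a unique `ℂ`-linear map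
`Φ₂` on this span with `Φ₂(ΘS(g)) = |Θ|⁻¹·U(g)`, and `Φ₂` is multiplicative. -/
theorem phi_two_exists_unique_multiplicative {G Θ : Type*} [Group G] [Fintype G]
    [Group Θ] [Fintype Θ] (φ : Θ →* MulAut G) :
    (∀ x ∈ Submodule.span ℂ (Set.range (thetaS2 φ)),
      ∀ y ∈ Submodule.span ℂ (Set.range (thetaS2 φ)),
        x * y ∈ Submodule.span ℂ (Set.range (thetaS2 φ))) ∧
    ∃ Φ : (Submodule.span ℂ (Set.range (thetaS2 φ))) →ₗ[ℂ]
        MonoidAlgebra ℂ (G ⋊[φ] Θ),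
      (∀ g : G,
        Φ ⟨thetaS2 φ g, Submodule.subset_span (Set.mem_range_self g)⟩ =
          ((Fintype.card Θ : ℂ))⁻¹ • Uel2 φ g) ∧
      (∀ Φ' : (Submodule.span ℂ (Set.range (thetaS2 φ))) →ₗ[ℂ]
          MonoidAlgebra ℂ (G ⋊[φ] Θ),
        (∀ g : G,
          Φ' ⟨thetaS2 φ g, Submodule.subset_span (Set.mem_range_self g)⟩ =
            ((Fintype.card Θ : ℂ))⁻¹ • Uel2 φ g) → Φ' = Φ) ∧
      (∀ (x y : Submodule.span ℂ (Set.range (thetaS2 φ)))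
        (hxy : x.val * y.val ∈ Submodule.span ℂ (Set.range (thetaS2 φ))),
        Φ ⟨x.val * y.val, hxy⟩ = Φ x * Φ y) := by
  classical
  have hgen : ∀ g h : G,
      thetaS2 φ g * thetaS2 φ h ∈ Submodule.span ℂ (Set.range (thetaS2 φ)) := by
    intro g h
    rw [PhiTwoAux.thetaS2_mul]
    exact Submodule.sum_mem _ fun δ _ => Submodule.subset_span (Set.mem_range_self _)
  have hclosed : ∀ x ∈ Submodule.span ℂ (Set.range (thetaS2 φ)),
      ∀ y ∈ Submodule.span ℂ (Set.range (thetaS2 φ)),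
        x * y ∈ Submodule.span ℂ (Set.range (thetaS2 φ)) := by
    intro x hx y hy
    induction hx, hy using Submodule.span_induction₂ with
    | mem_mem a b ha hb =>
        obtain ⟨g, rfl⟩ := ha; obtain ⟨h, rfl⟩ := hb; exact hgen g h
    | zero_left y hy => simp
    | zero_right x hx => simp
    | add_left x y z hx hy hz h1 h2 => rw [add_mul]; exact add_mem h1 h2
    | add_right x y z hx hy hz h1 h2 => rw [mul_add]; exact add_mem h1 h2
    | smul_left r x y hx hy h => rw [smul_mul_assoc]; exact Submodule.smul_mem _ _ h
    | smul_right r x y hx hy h => rw [mul_smul_comm]; exact Submodule.smul_mem _ _ h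
  refine ⟨hclosed, (PhiTwoAux.L φ).comp
    (Submodule.span ℂ (Set.range (thetaS2 φ))).subtype,
    fun g => PhiTwoAux.L_thetaS φ g, ?_, ?_⟩
  · intro Φ' hΦ'
    apply LinearMap.ext
    rintro ⟨x, hx⟩
    induction hx using Submodule.span_induction with
    | mem a ha =>
        obtain ⟨g, rfl⟩ := ha
        exact (hΦ' g).trans (PhiTwoAux.L_thetaS φ g).symm
    | zero =>
        show Φ' 0 = _
        simp only [map_zero]
        symm
        exact map_zero _
    | add x y hx hy ihx ihy =>
        have hxy : (⟨x + y, add_mem hx hy⟩ :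
            Submodule.span ℂ (Set.range (thetaS2 φ))) = ⟨x, hx⟩ + ⟨y, hy⟩ := rfl
        rw [hxy, map_add, map_add, ihx, ihy]
    | smul a x hx ih =>
        have hax : (⟨a • x, Submodule.smul_mem _ a hx⟩ :
            Submodule.span ℂ (Set.range (thetaS2 φ))) = a • ⟨x, hx⟩ := rfl
        rw [hax, map_smul, map_smul, ih]
  · intro x y hxy
    have hLmul : ∀ a ∈ Submodule.span ℂ (Set.range (thetaS2 φ)),
        ∀ b ∈ Submodule.span ℂ (Set.range (thetaS2 φ)),
          PhiTwoAux.L φ (a * b) = PhiTwoAux.L φ a * PhiTwoAux.L φ b := by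
      intro a ha b hb
      induction ha, hb using Submodule.span_induction₂ with
      | mem_mem a b ha hb =>
          obtain ⟨g, rfl⟩ := ha; obtain ⟨h, rfl⟩ := hb
          exact PhiTwoAux.L_mul_gen φ g h
      | zero_left b hb => simp
      | zero_right a ha => simp
      | add_left x y z hx hy hz h1 h2 => rw [add_mul, map_add, map_add, add_mul, h1, h2]
      | add_right x y z hx hy hz h1 h2 => rw [mul_add, map_add, map_add, mul_add, h1, h2]
      | smul_left r x y hx hy h =>
          rw [smul_mul_assoc, map_smul, map_smul, smul_mul_assoc, h]
      | smul_right r x y hx hy h =>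
          rw [mul_smul_comm, map_smul, map_smul, mul_smul_comm, h]
    exact hLmul x.val x.property y.val y.property


end
end
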